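/- For t, τ ∈ (0, a) with a < 1/2, the integral ∫₀^a x/((t+x)(τ+x)) dx is bounded above and below by positive constant multiples (depending only on a) of |log(t+τ)| + 1. -/

import Mathlib

open MeasureTheory

private lemma int_inv_shift (s a : ℝ) (hs : 0 < s) (ha : 0 < a) :
    ∫ x in (0:ℝ)..a, (s + x)⁻¹ = Real.log (s + a) - Real.log s := by
  have key : ∀ x ∈ Set.uIcc (0:ℝ) a, HasDerivAt (fun y => Real.log (s + y)) ((s + x)⁻¹) x := by
    intro x hx
    rw [Set.uIcc_of_le ha.le] at hx
    have hpos : 0 < s + x := by linarith [hx.1]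
    have h1 : HasDerivAt (fun y : ℝ => s + y) 1 x := (hasDerivAt_id x).const_add s
    simpa [one_div] using h1.log hpos.ne'
  have hint : IntervalIntegrable (fun x => (s + x)⁻¹) volume 0 a := by
    apply ContinuousOn.intervalIntegrable
    apply ContinuousOn.inv₀ (by fun_prop)
    intro x hx
    rw [Set.uIcc_of_le ha.le] at hx
    have : 0 < s + x := by linarith [hx.1]
    exact this.ne'
  have := intervalIntegral.integral_eq_sub_of_hasDerivAt key hint
  simpa using this

private lemma int_frac_shift (s a : ℝ) (hs : 0 < s) (ha : 0 < a) :
    ∫ x in (0:ℝ)..a, x / (s + x) ^ 2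
      = Real.log (s + a) - Real.log s - a / (s + a) := by
  have key : ∀ x ∈ Set.uIcc (0:ℝ) a,
      HasDerivAt (fun y => Real.log (s + y) + s / (s + y)) (x / (s + x) ^ 2) x := by
    intro x hx
    rw [Set.uIcc_of_le ha.le] at hx
    have hpos : 0 < s + x := by linarith [hx.1]
    have h1 : HasDerivAt (fun y : ℝ => s + y) 1 x := (hasDerivAt_id x).const_add s
    have h2 : HasDerivAt (fun y => Real.log (s + y)) (1 / (s + x)) x := h1.log hpos.ne'
    have h3 : HasDerivAt (fun y : ℝ => s / (s + y)) ((0 * (s + x) - s * 1) / (s + x) ^ 2) x :=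
      (hasDerivAt_const x s).div h1 hpos.ne'
    have := h2.add h3
    convert this using 1
    · rfl
    · rfl
    · rfl
    field_simp
    ring
  have hint : IntervalIntegrable (fun x => x / (s + x) ^ 2) volume 0 a := by
    apply ContinuousOn.intervalIntegrable
    apply ContinuousOn.div (by fun_prop) (by fun_prop)
    intro x hx
    rw [Set.uIcc_of_le ha.le] at hx
    have : 0 < s + x := by linarith [hx.1]
    positivity
  have := intervalIntegral.integral_eq_sub_of_hasDerivAt key hint
  rw [this]
  have hsa : 0 < s + a := by linarith
  field_simp
  ring

private lemma J_ge_delta (a s : ℝ) (ha : 0 < a) (hs : 0 < s) (hs2 : s < 2 * a) :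
    Real.log (3/2) - 1/3 ≤ Real.log (s + a) - Real.log s - a / (s + a) := by
  have hsa : 0 < s + a := by linarith
  set w : ℝ := 2 * (s + a) / (3 * s) with hw
  have hwpos : 0 < w := by positivity
  have hw1 : Real.log w⁻¹ ≤ w⁻¹ - 1 := Real.log_le_sub_one_of_pos (by positivity)
  rw [Real.log_inv] at hw1
  have hlogw : Real.log w = Real.log (s + a) - Real.log s - Real.log (3/2) := by
    rw [hw, Real.log_div (by positivity) (by positivity), Real.log_mul (by norm_num) hsa.ne',
      Real.log_mul (by norm_num) hs.ne', Real.log_div (by norm_num) (by norm_num)]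
    ring
  have hwinv : w⁻¹ = 3 * s / (2 * (s + a)) := by
    rw [hw]; field_simp
  have hfrac : 3 * s / (2 * (s + a)) - 1 + a / (s + a) ≤ 1/3 := by
    have key : (1:ℝ)/3 - (3 * s / (2 * (s + a)) - 1 + a / (s + a))
        = (2*a - s)/(6*(s+a)) := by field_simp; ring
    have hnn : (0:ℝ) ≤ (2*a - s)/(6*(s+a)) :=
      div_nonneg (by linarith) (by positivity)
    linarith
  nlinarith [hw1, hlogw, hwinv, hfrac]

theorem stmt_11 (a : ℝ) (ha : 0 < a) (ha' : a < 1 / 2) :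
    ∃ c₁ c₂ : ℝ, 0 < c₁ ∧ 0 < c₂ ∧
      ∀ t ∈ Set.Ioo 0 a, ∀ τ ∈ Set.Ioo 0 a,
        c₁ * (|Real.log (t + τ)| + 1) ≤ (∫ x in Set.Ioo 0 a, x / ((t + x) * (τ + x))) ∧
        (∫ x in Set.Ioo 0 a, x / ((t + x) * (τ + x))) ≤ c₂ * (|Real.log (t + τ)| + 1) := by
  set δ : ℝ := Real.log (3/2) - 1/3 with hδdef
  set K : ℝ := -Real.log a with hKdef
  have hK : 0 < K := by
    have : Real.log a < 0 := Real.log_neg ha (by linarith)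
    simp [hKdef]; linarith
  have hδ : 0 < δ := by
    have h1 : Real.log ((3:ℝ)/2)⁻¹ < ((3:ℝ)/2)⁻¹ - 1 :=
      Real.log_lt_sub_one_of_pos (by norm_num) (by norm_num)
    rw [Real.log_inv] at h1
    rw [hδdef]
    norm_num at h1 ⊢
    linarith
  refine ⟨min (δ / (2 * K + 4)) (1/4), 1, lt_min (by positivity) (by norm_num), one_pos, ?_⟩
  intro t ht τ hτ
  set s : ℝ := t + τ with hsdef
  have hs : 0 < s := by have := ht.1; have := hτ.1; rw [hsdef]; linarith
  have hs2 : s < 2 * a := by have := ht.2; have := hτ.2; rw [hsdef]; linarith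
  have hs1 : s < 1 := by linarith
  have hsa : 0 < s + a := by linarith
  -- integrability
  have hIf : IntegrableOn (fun x => x / ((t + x) * (τ + x))) (Set.Ioo 0 a) volume := by
    apply IntegrableOn.mono_set _ Set.Ioo_subset_Icc_self
    apply ContinuousOn.integrableOn_Icc
    apply ContinuousOn.div (by fun_prop) (by fun_prop)
    intro x hx
    have h1 : 0 < t + x := by have := ht.1; have := hx.1; linarith
    have h2 : 0 < τ + x := by have := hτ.1; have := hx.1; linarith
    positivity
  have hIg : IntegrableOn (fun x => (s + x)⁻¹) (Set.Ioo 0 a) volume := by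
    apply IntegrableOn.mono_set _ Set.Ioo_subset_Icc_self
    apply ContinuousOn.integrableOn_Icc
    apply ContinuousOn.inv₀ (by fun_prop)
    intro x hx
    have : 0 < s + x := by have := hx.1; linarith
    exact this.ne'
  have hIh : IntegrableOn (fun x => x / (s + x) ^ 2) (Set.Ioo 0 a) volume := by
    apply IntegrableOn.mono_set _ Set.Ioo_subset_Icc_self
    apply ContinuousOn.integrableOn_Icc
    apply ContinuousOn.div (by fun_prop) (by fun_prop)
    intro x hx
    have : 0 < s + x := by have := hx.1; linarith
    positivity
  -- conversion Ioo ↔ interval integral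
  have conv : ∀ g : ℝ → ℝ, (∫ x in Set.Ioo 0 a, g x) = ∫ x in (0:ℝ)..a, g x := by
    intro g
    rw [intervalIntegral.integral_of_le ha.le, ← integral_Ioc_eq_integral_Ioo]
  -- upper bound
  have hub : (∫ x in Set.Ioo 0 a, x / ((t + x) * (τ + x)))
      ≤ Real.log (s + a) - Real.log s := by
    calc (∫ x in Set.Ioo 0 a, x / ((t + x) * (τ + x)))
        ≤ ∫ x in Set.Ioo 0 a, (s + x)⁻¹ := by
          apply setIntegral_mono_on hIf hIg measurableSet_Ioo
          intro x hx
          have h1 : 0 < t + x := by have := ht.1; have := hx.1; linarith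
          have h2 : 0 < τ + x := by have := hτ.1; have := hx.1; linarith
          have h3 : 0 < s + x := by have := hx.1; linarith
          rw [inv_eq_one_div, div_le_div_iff₀ (by positivity) h3]
          have hxeq : s = t + τ := hsdef
          nlinarith [mul_pos ht.1 hτ.1, hx.1.le]
      _ = ∫ x in (0:ℝ)..a, (s + x)⁻¹ := conv _
      _ = Real.log (s + a) - Real.log s := int_inv_shift s a hs ha
  -- lower bound
  have hlb : Real.log (s + a) - Real.log s - a / (s + a)
      ≤ (∫ x in Set.Ioo 0 a, x / ((t + x) * (τ + x))) := by
    calc Real.log (s + a) - Real.log s - a / (s + a)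
        = ∫ x in (0:ℝ)..a, x / (s + x) ^ 2 := (int_frac_shift s a hs ha).symm
      _ = ∫ x in Set.Ioo 0 a, x / (s + x) ^ 2 := (conv _).symm
      _ ≤ ∫ x in Set.Ioo 0 a, x / ((t + x) * (τ + x)) := by
          apply setIntegral_mono_on hIh hIf measurableSet_Ioo
          intro x hx
          have h1 : 0 < t + x := by have := ht.1; have := hx.1; linarith
          have h2 : 0 < τ + x := by have := hτ.1; have := hx.1; linarith
          have h3 : 0 < s + x := by have := hx.1; linarith
          rw [div_le_div_iff₀ (by positivity) (by positivity), hsdef]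
          nlinarith [hx.1.le, ht.1.le, hτ.1.le,
            mul_nonneg hx.1.le (mul_nonneg ht.1.le hτ.1.le),
            mul_nonneg hx.1.le (mul_nonneg ht.1.le ht.1.le),
            mul_nonneg hx.1.le (mul_nonneg hτ.1.le hτ.1.le),
            mul_nonneg (mul_nonneg hx.1.le hx.1.le) ht.1.le,
            mul_nonneg (mul_nonneg hx.1.le hx.1.le) hτ.1.le]
  -- log facts
  have hlogs_neg : Real.log s < 0 := Real.log_neg hs hs1
  have habs : |Real.log s| = -Real.log s := abs_of_neg hlogs_neg
  set L : ℝ := -Real.log s with hLdef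
  have hL : 0 < L := by rw [hLdef]; linarith
  constructor
  · -- lower bound
    have hJδ : δ ≤ Real.log (s + a) - Real.log s - a / (s + a) :=
      J_ge_delta a s ha hs hs2
    have hJL : L - K - 1 ≤ Real.log (s + a) - Real.log s - a / (s + a) := by
      have h1 : Real.log a ≤ Real.log (s + a) :=
        Real.log_le_log ha (by linarith)
      have h2 : a / (s + a) ≤ 1 := by
        rw [div_le_one hsa]; linarith
      rw [hLdef, hKdef]; linarith
    rw [habs]
    by_cases hcase : L ≤ 2 * K + 3
    · have h1 : min (δ / (2 * K + 4)) (1/4) * (L + 1)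
          ≤ (δ / (2 * K + 4)) * (L + 1) :=
        mul_le_mul_of_nonneg_right (min_le_left _ _) (by linarith)
      have h2 : (δ / (2 * K + 4)) * (L + 1) ≤ δ := by
        have h3 : (δ / (2 * K + 4)) * (L + 1) ≤ (δ / (2 * K + 4)) * (2 * K + 4) :=
          mul_le_mul_of_nonneg_left (by linarith) (by positivity)
        rw [div_mul_cancel₀ δ (by positivity : (2 * K + 4) ≠ 0)] at h3
        exact h3
      linarith
    · push_neg at hcase
      have h1 : min (δ / (2 * K + 4)) (1/4) * (L + 1) ≤ (1/4) * (L + 1) :=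
        mul_le_mul_of_nonneg_right (min_le_right _ _) (by linarith)
      have h2 : (1/4) * (L + 1) ≤ L - K - 1 := by linarith
      linarith
  · -- upper bound
    have h1 : Real.log (s + a) ≤ 1 := by
      have := Real.log_le_sub_one_of_pos hsa
      linarith
    rw [habs, one_mul]
    linarith
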